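/- Let (U₁, U₂) be a universal commuting pair of operators on a separable infinite-dimensional complex Hilbert space H. Then the intersection Ker(U₁) ∩ Ker(U₂) is infinite-dimensional, and both U₁ and U₂ are universal operators on H. -/

import Mathlib

noncomputable section

/-- Universal operator on a complex Hilbert space. -/
def IsUniversal {H : Type*} [NormedAddCommGroup H] [InnerProductSpace ℂ H]
    (U : H →L[ℂ] H) : Prop :=
  ∀ T : H →L[ℂ] H, ∃ M : Submodule ℂ H, IsClosed (M : Set H) ∧ (∀ x ∈ M, U x ∈ M) ∧
    ∃ c : ℂ, c ≠ 0 ∧ ∃ J : H ≃L[ℂ] M, ∀ x : H, U (J x : H) = c • ((J (T x) : H))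

/-- A commuting pair `(U₁, U₂)` is a *universal commuting pair* if for every commuting pair
`(S₁, S₂)` there are a nonzero `c ∈ ℂ`, a closed subspace `M` invariant under both `U₁` and
`U₂`, and a continuous linear isomorphism `V : H ≃ M` with `Uᵢ (V x) = c • V (Sᵢ x)` for
all `x` and `i = 1, 2`. -/
def IsUniversalPair {H : Type*} [NormedAddCommGroup H] [InnerProductSpace ℂ H]
    (U₁ U₂ : H →L[ℂ] H) : Prop :=
  U₁.comp U₂ = U₂.comp U₁ ∧
  ∀ S₁ S₂ : H →L[ℂ] H, S₁.comp S₂ = S₂.comp S₁ →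
    ∃ M : Submodule ℂ H, IsClosed (M : Set H) ∧
      (∀ x ∈ M, U₁ x ∈ M) ∧ (∀ x ∈ M, U₂ x ∈ M) ∧
      ∃ c : ℂ, c ≠ 0 ∧ ∃ V : H ≃L[ℂ] M,
        (∀ x : H, U₁ (V x : H) = c • ((V (S₁ x) : H))) ∧
        (∀ x : H, U₂ (V x : H) = c • ((V (S₂ x) : H)))

/-- If `(U₁, U₂)` is a universal commuting pair, then `Ker U₁ ∩ Ker U₂` is
infinite-dimensional and both `U₁` and `U₂` are universal operators. -/
theorem universalPair_necessary_conditions {H : Type*} [NormedAddCommGroup H]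
    [InnerProductSpace ℂ H] [CompleteSpace H] [TopologicalSpace.SeparableSpace H]
    (hinf : ¬ FiniteDimensional ℂ H)
    (U₁ U₂ : H →L[ℂ] H) (h : IsUniversalPair U₁ U₂) :
    ¬ FiniteDimensional ℂ (LinearMap.ker (U₁ : H →ₗ[ℂ] H) ⊓ LinearMap.ker (U₂ : H →ₗ[ℂ] H) : Submodule ℂ H) ∧
    IsUniversal U₁ ∧ IsUniversal U₂ := by
  obtain ⟨-, huniv⟩ := h
  refine ⟨?_, ?_, ?_⟩
  · -- kernel intersection is infinite-dimensional
    obtain ⟨M, -, -, -, c, -, V, hV₁, hV₂⟩ :=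
      huniv 0 0 rfl
    intro hfin
    apply hinf
    set K : Submodule ℂ H := LinearMap.ker (U₁ : H →ₗ[ℂ] H) ⊓ LinearMap.ker (U₂ : H →ₗ[ℂ] H)
    have hmem : ∀ x : H, (V x : H) ∈ K := by
      intro x
      have h1 : U₁ (V x : H) = 0 := by
        rw [hV₁ x]; simp
      have h2 : U₂ (V x : H) = 0 := by
        rw [hV₂ x]; simp
      exact ⟨h1, h2⟩
    let f : H →ₗ[ℂ] K :=
      LinearMap.codRestrict K (M.subtype.comp (V : H →L[ℂ] M).toLinearMap) hmem
    have hinj : Function.Injective f := by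
      intro x y hxy
      have h' := congrArg Subtype.val hxy
      exact V.injective (Subtype.ext h')
    exact FiniteDimensional.of_injective f hinj
  · intro T
    obtain ⟨M, hMc, hM₁, -, c, hc, V, hV₁, -⟩ :=
      huniv T 1 (by ext x; simp)
    exact ⟨M, hMc, hM₁, c, hc, V, hV₁⟩
  · intro T
    obtain ⟨M, hMc, -, hM₂, c, hc, V, -, hV₂⟩ :=
      huniv 1 T (by ext x; simp)
    exact ⟨M, hMc, hM₂, c, hc, V, hV₂⟩

end
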